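/- arXiv:math/0409333 — 2 statements merged into one kernel-verified Lean document; each statement's English description precedes it below -/
import Mathlib

section
/- For every point ω ∈ Ω there exists a sequence of signatures λ^{(N)} ∈ SGN(N), N = 1, 2, …, such that ι_N(λ^{(N)}) converges to ω coordinatewise: for every i ≥ 1 the i-th coordinates of α⁺, β⁺, α⁻, β⁻ of ι_N(λ^{(N)}) converge to those of ω, and the coordinates δ⁺, δ⁻ of ι_N(λ^{(N)}) converge to those of ω. In other words, the union of the images ι_N(SGN(N)) is dense in Ω in the product topology. -/
open Filter Topology

/-- A signature of length `N`: a nonincreasing `N`-tuple of integers. -/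
def Signature (N : ℕ) : Type := {l : Fin N → ℤ // Antitone l}

/-- The number of diagonal boxes `d(μ)` of a Young diagram `μ`. -/
def diagLen (μ : YoungDiagram) : ℕ := (μ.cells.filter fun c => c.1 = c.2).card

/-- The Young diagram `λ⁺` whose `i`-th row is `max(λ_i, 0)`. -/
def sigPosDiagram {N : ℕ} (l : Signature N) : YoungDiagram :=
  YoungDiagram.ofRowLens (List.ofFn fun i => (l.1 i).toNat)
    (List.sortedGE_ofFn_iff.mpr fun _ _ h => Int.toNat_le_toNat (l.2 h))

/-- The Young diagram `λ⁻` whose `j`-th row is `max(-λ_{N+1-j}, 0)`. -/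
def sigNegDiagram {N : ℕ} (l : Signature N) : YoungDiagram :=
  YoungDiagram.ofRowLens (List.ofFn fun i => (-(l.1 i.rev)).toNat)
    (List.sortedGE_ofFn_iff.mpr fun _ _ h =>
      Int.toNat_le_toNat (neg_le_neg (l.2 (Fin.rev_le_rev.mpr h))))

/-- `α`-coordinates of `ι_N(λ)`: `α_i = a_i(μ)/N` for `i ≤ d(μ)`, extended by zeros. -/
noncomputable def alphaCoord (N : ℕ) (μ : YoungDiagram) (k : ℕ) : ℝ :=
  if k < diagLen μ then ((μ.rowLen k : ℝ) - k - 1/2) / N else 0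

/-- `β`-coordinates of `ι_N(λ)`: `β_i = b_i(μ)/N` for `i ≤ d(μ)`, extended by zeros. -/
noncomputable def betaCoord (N : ℕ) (μ : YoungDiagram) (k : ℕ) : ℝ :=
  if k < diagLen μ then ((μ.colLen k : ℝ) - k - 1/2) / N else 0

/-- A point `ω = (α⁺, β⁺, α⁻, β⁻, δ⁺, δ⁻)` of the ambient coordinate space. -/
structure OmegaPoint where
  alphaP : ℕ → ℝ
  betaP : ℕ → ℝ
  alphaM : ℕ → ℝ
  betaM : ℕ → ℝ
  deltaP : ℝ
  deltaM : ℝ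

/-- Membership in `Ω`: the `α`'s and `β`'s are nonincreasing sequences of nonnegative
reals, `δ± ≥ 0`, `β⁺_1 + β⁻_1 ≤ 1`, and `Σ_{i≥1}(α±_i + β±_i) ≤ δ±`. -/
def InOmega (ω : OmegaPoint) : Prop :=
  Antitone ω.alphaP ∧ (∀ k, 0 ≤ ω.alphaP k) ∧
  Antitone ω.betaP ∧ (∀ k, 0 ≤ ω.betaP k) ∧
  Antitone ω.alphaM ∧ (∀ k, 0 ≤ ω.alphaM k) ∧
  Antitone ω.betaM ∧ (∀ k, 0 ≤ ω.betaM k) ∧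
  0 ≤ ω.deltaP ∧ 0 ≤ ω.deltaM ∧
  ω.betaP 0 + ω.betaM 0 ≤ 1 ∧
  Summable (fun k => ω.alphaP k + ω.betaP k) ∧
  (∑' k, (ω.alphaP k + ω.betaP k)) ≤ ω.deltaP ∧
  Summable (fun k => ω.alphaM k + ω.betaM k) ∧
  (∑' k, (ω.alphaM k + ω.betaM k)) ≤ ω.deltaM

namespace DenseAux

lemma nat_eq_of_lt_iff {a b : ℕ} (h : ∀ j, j < a ↔ j < b) : a = b := by
  have h1 := h a; have h2 := h b; omega

section Generic

variable {Y : YoungDiagram} {f : ℕ → ℕ} {n : ℕ}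

lemma rowLen_of_mem (hmem : ∀ i j : ℕ, (i, j) ∈ Y ↔ j < f i) (i : ℕ) :
    Y.rowLen i = f i := by
  refine nat_eq_of_lt_iff fun j => ?_
  rw [← YoungDiagram.mem_iff_lt_rowLen, hmem]

lemma cells_of_mem (hmem : ∀ i j : ℕ, (i, j) ∈ Y ↔ j < f i) (hf : Antitone f)
    (hn : ∀ i, n ≤ i → f i = 0) :
    Y.cells = (Finset.range n ×ˢ Finset.range (f 0)).filter fun c => c.2 < f c.1 := by
  ext ⟨a, b⟩
  simp only [YoungDiagram.mem_cells, hmem, Finset.mem_filter, Finset.mem_product,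
    Finset.mem_range]
  constructor
  · intro h
    have h1 : a < n := by
      by_contra hc
      rw [hn a (le_of_not_gt hc)] at h; omega
    exact ⟨⟨h1, lt_of_lt_of_le h (hf (Nat.zero_le a))⟩, h⟩
  · exact fun h => h.2

lemma card_of_mem (hmem : ∀ i j : ℕ, (i, j) ∈ Y ↔ j < f i) (hf : Antitone f)
    (hn : ∀ i, n ≤ i → f i = 0) :
    Y.card = ∑ i ∈ Finset.range n, f i := by
  show Y.cells.card = _
  rw [cells_of_mem hmem hf hn, Finset.card_filter, Finset.sum_product]
  refine Finset.sum_congr rfl fun i _ => ?_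
  rw [← Finset.card_filter]
  have : (Finset.range (f 0)).filter (fun j => j < f i) = Finset.range (f i) := by
    ext j
    simp only [Finset.mem_filter, Finset.mem_range]
    have := hf (Nat.zero_le i)
    omega
  rw [this, Finset.card_range]

end Generic

section Rfun

/-- Row-length profile: `m` Frobenius rows with arms `A k`, an `s × s` block,
and a tail encoding legs `B k`. -/
def rfun (m s : ℕ) (A B : ℕ → ℕ) (i : ℕ) : ℕ :=
  if i < m then A i + m + s + 1
  else if i < m + s then m + s
  else ((Finset.range m).filter fun k => i - (m + s) ≤ B k).card

variable {m s : ℕ} {A B : ℕ → ℕ}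

lemma rfun_head {i : ℕ} (hi : i < m) : rfun m s A B i = A i + m + s + 1 := if_pos hi

lemma rfun_mid {i : ℕ} (h1 : m ≤ i) (h2 : i < m + s) : rfun m s A B i = m + s := by
  rw [rfun, if_neg (by omega), if_pos h2]

lemma rfun_tail {i : ℕ} (h : m + s ≤ i) :
    rfun m s A B i = ((Finset.range m).filter fun k => i - (m + s) ≤ B k).card := by
  rw [rfun, if_neg (by omega), if_neg (by omega)]

lemma rfun_tail_le (i : ℕ) (hi : m + s ≤ i) : rfun m s A B i ≤ m := by
  rw [rfun_tail hi]
  exact (Finset.card_filter_le _ _).trans (by simp)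

lemma rfun_antitone (hA : Antitone A) (hB : Antitone B) : Antitone (rfun m s A B) := by
  intro i j hij
  rcases lt_or_ge i m with hi | hi
  · rw [rfun_head hi]
    rcases lt_or_ge j m with hj | hj
    · rw [rfun_head hj]
      have := hA hij; omega
    · rcases lt_or_ge j (m + s) with hj2 | hj2
      · rw [rfun_mid hj hj2]; omega
      · exact (rfun_tail_le j hj2).trans (by omega)
  · rcases lt_or_ge j (m + s) with hj2 | hj2
    · rw [rfun_mid (hi.trans hij) hj2, rfun_mid hi (lt_of_le_of_lt hij hj2)]
    · rw [rfun_tail hj2]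
      rcases lt_or_ge i (m + s) with hi2 | hi2
      · rw [rfun_mid hi hi2]
        calc ((Finset.range m).filter fun k => j - (m + s) ≤ B k).card
            ≤ (Finset.range m).card := Finset.card_filter_le _ _
          _ ≤ m + s := by simp
      · rw [rfun_tail hi2]
        refine Finset.card_le_card fun k hk => ?_
        simp only [Finset.mem_filter] at hk ⊢
        exact ⟨hk.1, le_trans (by omega) hk.2⟩

lemma rfun_eq_zero (hB : Antitone B) (i : ℕ) (hi : m + s + B 0 + 1 ≤ i) :
    rfun m s A B i = 0 := by
  rw [rfun_tail (by omega), Finset.card_eq_zero, Finset.filter_eq_empty_iff]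
  intro k hk
  have := hB (Nat.zero_le k)
  omega

variable {Y : YoungDiagram}

lemma rowLen_rfun (hmem : ∀ i j : ℕ, (i, j) ∈ Y ↔ j < rfun m s A B i) {k : ℕ}
    (hk : k < m) : Y.rowLen k = A k + m + s + 1 := by
  rw [rowLen_of_mem hmem, rfun_head hk]

lemma colLen_rfun (hB : Antitone B) (hmem : ∀ i j : ℕ, (i, j) ∈ Y ↔ j < rfun m s A B i)
    {k : ℕ} (hk : k < m) : Y.colLen k = m + s + B k + 1 := by
  refine nat_eq_of_lt_iff fun i => ?_
  rw [← YoungDiagram.mem_iff_lt_colLen, hmem]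
  have hBk0 : B k ≤ B 0 := hB (Nat.zero_le k)
  rcases lt_or_ge i m with hi | hi
  · rw [rfun_head hi]
    constructor <;> intro <;> omega
  · rcases lt_or_ge i (m + s) with hi2 | hi2
    · rw [rfun_mid hi hi2]
      constructor <;> intro <;> omega
    · rw [rfun_tail hi2]
      constructor
      · intro h
        by_contra hc
        have hsub : ((Finset.range m).filter fun k' => i - (m + s) ≤ B k') ⊆
            Finset.range k := by
          intro k' hk'
          simp only [Finset.mem_filter, Finset.mem_range] at hk'
          simp only [Finset.mem_range]
          by_contra hc2
          have := hB (le_of_not_gt hc2)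
          omega
        have hcard := Finset.card_le_card hsub
        rw [Finset.card_range] at hcard
        omega
      · intro h
        have ht : i - (m + s) ≤ B k := by omega
        have hsub : Finset.range (k + 1) ⊆
            (Finset.range m).filter fun k' => i - (m + s) ≤ B k' := by
          intro k' hk'
          simp only [Finset.mem_range] at hk'
          simp only [Finset.mem_filter, Finset.mem_range]
          have hk'k : k' ≤ k := by omega
          exact ⟨by omega, ht.trans (hB hk'k)⟩
        have hcard := Finset.card_le_card hsub
        rw [Finset.card_range] at hcard
        omega

lemma diagLen_rfun (hB : Antitone B) (hmem : ∀ i j : ℕ, (i, j) ∈ Y ↔ j < rfun m s A B i) :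
    diagLen Y = m + s := by
  rw [diagLen]
  have hcells : (Y.cells.filter fun c => c.1 = c.2) =
      (Finset.range (m + s)).image fun i => (i, i) := by
    ext ⟨a, b⟩
    simp only [Finset.mem_filter, YoungDiagram.mem_cells, Finset.mem_image, Finset.mem_range,
      Prod.mk.injEq, hmem]
    constructor
    · rintro ⟨h1, rfl⟩
      refine ⟨a, ?_, rfl, rfl⟩
      by_contra hc
      have := rfun_tail_le (A := A) (B := B) a (le_of_not_gt hc)
      omega
    · rintro ⟨i, hi, rfl, rfl⟩
      refine ⟨?_, rfl⟩
      rcases lt_or_ge i m with h | h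
      · rw [rfun_head h]; omega
      · rw [rfun_mid h hi]; omega
  rw [hcells, Finset.card_image_of_injective _ (fun x y h => (Prod.mk.injEq _ _ _ _ ▸ h).1),
    Finset.card_range]

lemma card_rfun (hA : Antitone A) (hB : Antitone B)
    (hmem : ∀ i j : ℕ, (i, j) ∈ Y ↔ j < rfun m s A B i) :
    Y.card = (∑ k ∈ Finset.range m, (A k + B k)) + (m * m + 2 * m * s + s * s + 2 * m) := by
  have hz : ∀ i, m + s + B 0 + 1 ≤ i → rfun m s A B i = 0 := rfun_eq_zero hB
  rw [card_of_mem hmem (rfun_antitone hA hB) hz]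
  rw [Finset.range_eq_Ico,
    ← Finset.sum_Ico_consecutive _ (Nat.zero_le (m + s)) (by omega :
      m + s ≤ m + s + B 0 + 1),
    ← Finset.sum_Ico_consecutive _ (Nat.zero_le m) (by omega : m ≤ m + s)]
  have hhead : ∑ i ∈ Finset.Ico 0 m, rfun m s A B i
      = (∑ k ∈ Finset.range m, A k) + m * (m + s + 1) := by
    rw [← Finset.range_eq_Ico]
    have h1 : ∀ i ∈ Finset.range m, rfun m s A B i = A i + (m + s + 1) := by
      intro i hi
      rw [rfun_head (Finset.mem_range.mp hi)]
      ring
    rw [Finset.sum_congr rfl h1, Finset.sum_add_distrib, Finset.sum_const,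
      Finset.card_range, smul_eq_mul]
  have hmid : ∑ i ∈ Finset.Ico m (m + s), rfun m s A B i = s * (m + s) := by
    rw [Finset.sum_congr rfl fun i hi => by
      have := Finset.mem_Ico.mp hi
      exact rfun_mid this.1 this.2]
    rw [Finset.sum_const, Nat.card_Ico]
    simp [Nat.add_sub_cancel_left]
  have htail : ∑ i ∈ Finset.Ico (m + s) (m + s + B 0 + 1), rfun m s A B i
      = (∑ k ∈ Finset.range m, B k) + m := by
    rw [Finset.sum_Ico_eq_sum_range]
    have h1 : m + s + B 0 + 1 - (m + s) = B 0 + 1 := by omega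
    rw [h1]
    have h2 : ∀ j ∈ Finset.range (B 0 + 1),
        rfun m s A B (m + s + j) = ((Finset.range m).filter fun k => j ≤ B k).card := by
      intro j _
      rw [rfun_tail (by omega)]
      congr 1
      ext k
      simp only [Finset.mem_filter]
      constructor <;> intro h <;> exact ⟨h.1, by omega⟩
    rw [Finset.sum_congr rfl h2]
    have h3 : ∀ j, ((Finset.range m).filter fun k => j ≤ B k).card
        = ∑ k ∈ Finset.range m, if j ≤ B k then 1 else 0 := fun j => Finset.card_filter _ _
    simp only [h3]
    rw [Finset.sum_comm]
    have h4 : ∀ k ∈ Finset.range m,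
        (∑ j ∈ Finset.range (B 0 + 1), if j ≤ B k then 1 else 0) = B k + 1 := by
      intro k _
      rw [← Finset.card_filter]
      have : (Finset.range (B 0 + 1)).filter (fun j => j ≤ B k) = Finset.range (B k + 1) := by
        ext j
        simp only [Finset.mem_filter, Finset.mem_range]
        have := hB (Nat.zero_le k)
        omega
      rw [this, Finset.card_range]
    rw [Finset.sum_congr rfl h4, Finset.sum_add_distrib, Finset.sum_const, Finset.card_range,
      smul_eq_mul, mul_one]
  rw [hhead, hmid, htail, Finset.sum_add_distrib]
  ring

end Rfun


/-- `Nat.sqrt` tends to infinity. -/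
lemma tendsto_nat_sqrt : Tendsto Nat.sqrt atTop atTop := by
  refine tendsto_atTop_atTop.mpr fun b => ⟨b * b, fun a ha => ?_⟩
  calc b = Nat.sqrt (b * b) := (Nat.sqrt_eq b).symm
    _ ≤ Nat.sqrt a := Nat.sqrt_le_sqrt ha

lemma q4_tendsto : Tendsto (fun N : ℕ => Real.sqrt (Real.sqrt N)) atTop atTop := by
  have h1 : Tendsto (fun x : ℝ => Real.sqrt (Real.sqrt x)) atTop atTop := by
    refine tendsto_atTop_atTop.mpr fun b => ⟨(max b 1) ^ 4, fun a ha => ?_⟩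
    have hb1 : (0:ℝ) < max b 1 := lt_of_lt_of_le one_pos (le_max_right _ _)
    have h4 : ((max b 1) ^ 2) ^ 2 ≤ a := by nlinarith [le_max_right b 1]
    have h2 : (max b 1) ^ 2 ≤ Real.sqrt a := (Real.le_sqrt (by positivity)
      (le_trans (by positivity) h4)).mpr h4
    have h3 : max b 1 ≤ Real.sqrt (Real.sqrt a) :=
      (Real.le_sqrt hb1.le (Real.sqrt_nonneg _)).mpr h2
    exact le_trans (le_max_left b 1) h3
  exact h1.comp tendsto_natCast_atTop_atTop

lemma inv_q4_tendsto : Tendsto (fun N : ℕ => (Real.sqrt (Real.sqrt N))⁻¹) atTop (𝓝 0) :=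
  q4_tendsto.inv_tendsto_atTop

/-- Master lemma: any quantity bounded by `C · N^{3/4}` is `o(N)`. -/
lemma small_div (u : ℕ → ℝ) (C : ℝ)
    (h : ∀ᶠ N in atTop, 0 ≤ u N ∧
      u N ≤ C * (Real.sqrt (Real.sqrt N) * Real.sqrt N)) :
    Tendsto (fun N => u N / N) atTop (𝓝 0) := by
  have hupper : Tendsto (fun N : ℕ => C * (Real.sqrt (Real.sqrt N))⁻¹) atTop (𝓝 0) := by
    simpa using inv_q4_tendsto.const_mul C
  refine tendsto_of_tendsto_of_tendsto_of_le_of_le' tendsto_const_nhds hupper ?_ ?_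
  · filter_upwards [h] with N hN
    exact div_nonneg hN.1 (Nat.cast_nonneg N)
  · filter_upwards [h, eventually_ge_atTop 1] with N hN hN1
    have hN1' : (1:ℝ) ≤ (N:ℝ) := by exact_mod_cast hN1
    have hNpos : (0:ℝ) < N := by linarith
    have hq2 : Real.sqrt N * Real.sqrt N = (N:ℝ) := Real.mul_self_sqrt (by positivity)
    have hq4 : Real.sqrt (Real.sqrt N) * Real.sqrt (Real.sqrt N) = Real.sqrt N :=
      Real.mul_self_sqrt (Real.sqrt_nonneg _)
    have hq4pos : (0:ℝ) < Real.sqrt (Real.sqrt N) := by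
      have : (1:ℝ) ≤ Real.sqrt N := by
        rw [show (1:ℝ) = Real.sqrt 1 by simp]
        exact Real.sqrt_le_sqrt hN1'
      have : (1:ℝ) ≤ Real.sqrt (Real.sqrt N) := by
        rw [show (1:ℝ) = Real.sqrt 1 by simp]
        exact Real.sqrt_le_sqrt this
      linarith
    have key : Real.sqrt (Real.sqrt N) * Real.sqrt N / N
        = (Real.sqrt (Real.sqrt N))⁻¹ := by
      rw [div_eq_iff hNpos.ne']
      field_simp
      rw [sq, hq4, hq2]
    calc u N / N ≤ C * (Real.sqrt (Real.sqrt N) * Real.sqrt N) / N := by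
          gcongr
          exact hN.2
      _ = C * (Real.sqrt (Real.sqrt N) * Real.sqrt N / N) := by ring
      _ = C * (Real.sqrt (Real.sqrt N))⁻¹ := by rw [key]


section Construction

variable (ω : OmegaPoint)

/-- `m(N) = N^{1/4}`, the number of Frobenius coordinates kept at stage `N`. -/
def mfun (N : ℕ) : ℕ := Nat.sqrt (Nat.sqrt N)

/-- Partial sum of `α⁺ + β⁺` up to `m(N)`. -/
noncomputable def SP (N : ℕ) : ℝ := ∑ k ∈ Finset.range (mfun N), (ω.alphaP k + ω.betaP k)

noncomputable def SM (N : ℕ) : ℝ := ∑ k ∈ Finset.range (mfun N), (ω.alphaM k + ω.betaM k)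

/-- Side of the square block carrying the excess mass `δ⁺ - Σ`. -/
noncomputable def sP (N : ℕ) : ℕ := ⌊Real.sqrt (N * (ω.deltaP - SP ω N))⌋₊

noncomputable def sM (N : ℕ) : ℕ := ⌊Real.sqrt (N * (ω.deltaM - SM ω N))⌋₊

/-- Correction `c(N)` subtracted from `N` before taking floors. -/
noncomputable def cc (N : ℕ) : ℕ := 2 * mfun N + sP ω N + sM ω N + 2

noncomputable def NN (N : ℕ) : ℕ := N - cc ω N

noncomputable def AP (N k : ℕ) : ℕ := ⌊(NN ω N : ℝ) * ω.alphaP k⌋₊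
noncomputable def BP (N k : ℕ) : ℕ := ⌊(NN ω N : ℝ) * ω.betaP k⌋₊
noncomputable def AM (N k : ℕ) : ℕ := ⌊(NN ω N : ℝ) * ω.alphaM k⌋₊
noncomputable def BM (N k : ℕ) : ℕ := ⌊(NN ω N : ℝ) * ω.betaM k⌋₊

/-- Row profile for `λ⁺`. -/
noncomputable def rP (N : ℕ) : ℕ → ℕ := rfun (mfun N) (sP ω N) (AP ω N) (BP ω N)

/-- Row profile for `λ⁻`. -/
noncomputable def rM (N : ℕ) : ℕ → ℕ := rfun (mfun N) (sM ω N) (AM ω N) (BM ω N)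

/-- Number of rows of `λ⁺`. -/
noncomputable def RP (N : ℕ) : ℕ := mfun N + sP ω N + BP ω N 0 + 1

noncomputable def RM (N : ℕ) : ℕ := mfun N + sM ω N + BM ω N 0 + 1

/-- The entries of the signature at stage `N`. -/
noncomputable def lsig (N : ℕ) (i : ℕ) : ℤ :=
  if i < RP ω N then (rP ω N i : ℤ)
  else if N ≤ i + RM ω N then -(rM ω N (N - 1 - i) : ℤ)
  else 0

variable {ω}

lemma AP_antitone (hαP : Antitone ω.alphaP) (N : ℕ) : Antitone (AP ω N) := fun i j hij =>
  Nat.floor_mono (mul_le_mul_of_nonneg_left (hαP hij) (Nat.cast_nonneg _))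

lemma BP_antitone (hβP : Antitone ω.betaP) (N : ℕ) : Antitone (BP ω N) := fun i j hij =>
  Nat.floor_mono (mul_le_mul_of_nonneg_left (hβP hij) (Nat.cast_nonneg _))

lemma AM_antitone (hαM : Antitone ω.alphaM) (N : ℕ) : Antitone (AM ω N) := fun i j hij =>
  Nat.floor_mono (mul_le_mul_of_nonneg_left (hαM hij) (Nat.cast_nonneg _))

lemma BM_antitone (hβM : Antitone ω.betaM) (N : ℕ) : Antitone (BM ω N) := fun i j hij =>
  Nat.floor_mono (mul_le_mul_of_nonneg_left (hβM hij) (Nat.cast_nonneg _))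

lemma rP_antitone (hαP : Antitone ω.alphaP) (hβP : Antitone ω.betaP) (N : ℕ) :
    Antitone (rP ω N) :=
  rfun_antitone (AP_antitone hαP N) (BP_antitone hβP N)

lemma rM_antitone (hαM : Antitone ω.alphaM) (hβM : Antitone ω.betaM) (N : ℕ) :
    Antitone (rM ω N) :=
  rfun_antitone (AM_antitone hαM N) (BM_antitone hβM N)

lemma rP_zero (hβP : Antitone ω.betaP) (N i : ℕ) (hi : RP ω N ≤ i) : rP ω N i = 0 :=
  rfun_eq_zero (BP_antitone hβP N) i hi

lemma rM_zero (hβM : Antitone ω.betaM) (N i : ℕ) (hi : RM ω N ≤ i) : rM ω N i = 0 :=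
  rfun_eq_zero (BM_antitone hβM N) i hi

lemma lsig_antitone (hαP : Antitone ω.alphaP) (hβP : Antitone ω.betaP)
    (hαM : Antitone ω.alphaM) (hβM : Antitone ω.betaM) {N : ℕ}
    (h : RP ω N + RM ω N ≤ N) :
    Antitone fun i : Fin N => lsig ω N i := by
  intro i j hij
  have hij' : (i : ℕ) ≤ (j : ℕ) := hij
  have hjN : (j : ℕ) < N := j.2
  simp only [lsig]
  rcases lt_or_ge (j : ℕ) (RP ω N) with hj | hj
  · rw [if_pos hj, if_pos (lt_of_le_of_lt hij' hj)]
    exact_mod_cast rP_antitone hαP hβP N hij'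
  · rcases le_or_gt N ((j : ℕ) + RM ω N) with hj2 | hj2
    · rw [if_neg (not_lt.mpr hj), if_pos hj2]
      rcases lt_or_ge (i : ℕ) (RP ω N) with hi | hi
      · rw [if_pos hi]
        exact le_trans (neg_nonpos.mpr (Int.natCast_nonneg _)) (Int.natCast_nonneg _)
      · rcases le_or_gt N ((i : ℕ) + RM ω N) with hi2 | hi2
        · rw [if_neg (not_lt.mpr hi), if_pos hi2]
          have : rM ω N (N - 1 - (i : ℕ)) ≤ rM ω N (N - 1 - (j : ℕ)) :=
            rM_antitone hαM hβM N (by omega)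
          exact neg_le_neg (by exact_mod_cast this)
        · rw [if_neg (not_lt.mpr hi), if_neg (not_le.mpr hi2)]
          exact neg_nonpos.mpr (Int.natCast_nonneg _)
    · rw [if_neg (not_lt.mpr hj), if_neg (not_le.mpr hj2)]
      rcases lt_or_ge (i : ℕ) (RP ω N) with hi | hi
      · rw [if_pos hi]
        exact Int.natCast_nonneg _
      · rw [if_neg (not_lt.mpr hi), if_neg (by omega)]

/-- The signature at stage `N`. -/
noncomputable def sig (hαP : Antitone ω.alphaP) (hβP : Antitone ω.betaP)
    (hαM : Antitone ω.alphaM) (hβM : Antitone ω.betaM) (N : ℕ) : Signature N :=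
  if h : RP ω N + RM ω N ≤ N then
    ⟨fun i : Fin N => lsig ω N i, lsig_antitone hαP hβP hαM hβM h⟩
  else ⟨fun _ => 0, fun _ _ _ => le_refl 0⟩

variable {N : ℕ}

lemma toNat_lsig_pos (hβP : Antitone ω.betaP) (i : ℕ) :
    (lsig ω N i).toNat = rP ω N i := by
  rw [lsig]
  rcases lt_or_ge i (RP ω N) with hi | hi
  · rw [if_pos hi, Int.toNat_natCast]
  · rw [if_neg (not_lt.mpr hi), rP_zero hβP N i hi]
    rcases le_or_gt N (i + RM ω N) with hi2 | hi2
    · rw [if_pos hi2]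
      simp
    · rw [if_neg (not_le.mpr hi2)]
      rfl

lemma toNat_lsig_neg (hβM : Antitone ω.betaM) (h : RP ω N + RM ω N ≤ N) (i : ℕ)
    (hiN : i < N) :
    (-(lsig ω N (N - 1 - i))).toNat = rM ω N i := by
  rw [lsig]
  rcases lt_or_ge i (RM ω N) with hi | hi
  · have h1 : ¬ (N - 1 - i < RP ω N) := by omega
    have h2 : N ≤ (N - 1 - i) + RM ω N := by omega
    rw [if_neg h1, if_pos h2]
    have h3 : N - 1 - (N - 1 - i) = i := by omega
    rw [h3, neg_neg, Int.toNat_natCast]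
  · rw [rM_zero hβM N i hi]
    rcases lt_or_ge (N - 1 - i) (RP ω N) with h1 | h1
    · rw [if_pos h1]
      simp
    · rw [if_neg (not_lt.mpr h1)]
      rcases le_or_gt N ((N - 1 - i) + RM ω N) with h2 | h2
      · rw [if_pos h2]
        have h3 : N - 1 - (N - 1 - i) = i := by omega
        rw [h3, neg_neg, Int.toNat_natCast, rM_zero hβM N i hi]
      · rw [if_neg (not_le.mpr h2)]
        rfl

lemma sig_val (hαP : Antitone ω.alphaP) (hβP : Antitone ω.betaP)
    (hαM : Antitone ω.alphaM) (hβM : Antitone ω.betaM) (h : RP ω N + RM ω N ≤ N) (i : Fin N) :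
    (sig hαP hβP hαM hβM N).1 i = lsig ω N i := by
  have e : sig hαP hβP hαM hβM N =
      ⟨fun i : Fin N => lsig ω N i, lsig_antitone hαP hβP hαM hβM h⟩ := dif_pos h
  rw [e]

lemma mem_sigPos (hαP : Antitone ω.alphaP) (hβP : Antitone ω.betaP)
    (hαM : Antitone ω.alphaM) (hβM : Antitone ω.betaM) (h : RP ω N + RM ω N ≤ N) (i j : ℕ) :
    (i, j) ∈ sigPosDiagram (sig hαP hβP hαM hβM N) ↔ j < rP ω N i := by
  unfold sigPosDiagram
  rw [YoungDiagram.mem_ofRowLens]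
  simp only [List.length_ofFn, List.getElem_ofFn]
  simp only [sig_val hαP hβP hαM hβM h]
  constructor
  · rintro ⟨hiN, hj⟩
    rwa [toNat_lsig_pos hβP] at hj
  · intro hj
    have hi : i < RP ω N := by
      by_contra hc
      rw [rP_zero hβP N i (le_of_not_gt hc)] at hj
      omega
    have hiN : i < N := by omega
    refine ⟨hiN, ?_⟩
    show j < (lsig ω N i).toNat
    rwa [toNat_lsig_pos hβP]

lemma mem_sigNeg (hαP : Antitone ω.alphaP) (hβP : Antitone ω.betaP)
    (hαM : Antitone ω.alphaM) (hβM : Antitone ω.betaM) (h : RP ω N + RM ω N ≤ N) (i j : ℕ) :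
    (i, j) ∈ sigNegDiagram (sig hαP hβP hαM hβM N) ↔ j < rM ω N i := by
  unfold sigNegDiagram
  rw [YoungDiagram.mem_ofRowLens]
  simp only [List.length_ofFn, List.getElem_ofFn]
  simp only [sig_val hαP hβP hαM hβM h]
  constructor
  · rintro ⟨hiN, hj⟩
    simp only [Fin.rev, Fin.val_mk] at hj
    have he : N - ((⟨i, hiN⟩ : Fin N) + 1 : ℕ) = N - 1 - i := by simp; omega
    rw [he, toNat_lsig_neg hβM h i hiN] at hj
    exact hj
  · intro hj
    have hi : i < RM ω N := by
      by_contra hc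
      rw [rM_zero hβM N i (le_of_not_gt hc)] at hj
      omega
    have hiN : i < N := by omega
    refine ⟨hiN, ?_⟩
    show j < (-(lsig ω N ((⟨i, hiN⟩ : Fin N).rev : ℕ))).toNat
    rw [Fin.val_rev]
    have he : N - ((⟨i, hiN⟩ : Fin N) + 1 : ℕ) = N - 1 - i := by simp; omega
    rw [he, toNat_lsig_neg hβM h i hiN]
    exact hj

end Construction

section Analysis

variable {ω : OmegaPoint}

lemma one_le_sqrt' {x : ℝ} (hx : 1 ≤ x) : 1 ≤ Real.sqrt x := by
  rw [show (1:ℝ) = Real.sqrt 1 by simp]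
  exact Real.sqrt_le_sqrt hx

lemma tendsto_mfun : Tendsto mfun atTop atTop := tendsto_nat_sqrt.comp tendsto_nat_sqrt

lemma mfun_le (N : ℕ) : (mfun N : ℝ) ≤ Real.sqrt (Real.sqrt N) := by
  have h1 : ((Nat.sqrt N : ℕ) : ℝ) ≤ Real.sqrt N := Real.nat_sqrt_le_real_sqrt
  have h2 : (mfun N : ℝ) ≤ Real.sqrt (Nat.sqrt N) := Real.nat_sqrt_le_real_sqrt
  exact h2.trans (Real.sqrt_le_sqrt h1)

lemma floor_div_tendsto (NNf : ℕ → ℕ)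
    (hNN : Tendsto (fun N => (NNf N : ℝ) / N) atTop (𝓝 1)) (x : ℝ) (hx : 0 ≤ x) :
    Tendsto (fun N => ((⌊(NNf N : ℝ) * x⌋₊ : ℕ) : ℝ) / N) atTop (𝓝 x) := by
  have hlow : Tendsto (fun N : ℕ => (NNf N : ℝ) / N * x - 1 / N) atTop (𝓝 x) := by
    have := (hNN.mul_const x).sub tendsto_one_div_atTop_nhds_zero_nat
    simpa using this
  have hup : Tendsto (fun N : ℕ => (NNf N : ℝ) / N * x) atTop (𝓝 x) := by
    simpa using hNN.mul_const x
  refine tendsto_of_tendsto_of_tendsto_of_le_of_le' hlow hup ?_ ?_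
  · filter_upwards [eventually_ge_atTop 1] with N hN1
    have hNpos : (0:ℝ) < N := by exact_mod_cast hN1
    have h1 : (NNf N : ℝ) * x < (⌊(NNf N : ℝ) * x⌋₊ : ℝ) + 1 := Nat.lt_floor_add_one _
    have heq : (NNf N : ℝ) / N * x - 1 / N = ((NNf N : ℝ) * x - 1) / N := by ring
    rw [heq]
    gcongr
    linarith
  · filter_upwards [eventually_ge_atTop 1] with N hN1
    have hNpos : (0:ℝ) < N := by exact_mod_cast hN1
    have h1 : (⌊(NNf N : ℝ) * x⌋₊ : ℝ) ≤ (NNf N : ℝ) * x :=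
      Nat.floor_le (mul_nonneg (Nat.cast_nonneg _) hx)
    have heq : (NNf N : ℝ) / N * x = ((NNf N : ℝ) * x) / N := by ring
    rw [heq]
    gcongr

lemma s_le_sqrt (S : ℕ → ℝ) (δ : ℝ) (hS0 : ∀ N, 0 ≤ S N) (hSδ : ∀ N, S N ≤ δ) (N : ℕ) :
    ((⌊Real.sqrt (N * (δ - S N))⌋₊ : ℕ) : ℝ) ≤ Real.sqrt δ * Real.sqrt N := by
  have h0 : (0:ℝ) ≤ (N : ℝ) * (δ - S N) :=
    mul_nonneg (Nat.cast_nonneg _) (by linarith [hS0 N, hSδ N])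
  calc ((⌊Real.sqrt (N * (δ - S N))⌋₊ : ℕ) : ℝ)
      ≤ Real.sqrt ((N : ℝ) * (δ - S N)) := Nat.floor_le (Real.sqrt_nonneg _)
    _ = Real.sqrt N * Real.sqrt (δ - S N) := Real.sqrt_mul (Nat.cast_nonneg _) _
    _ ≤ Real.sqrt N * Real.sqrt δ :=
        mul_le_mul_of_nonneg_left (Real.sqrt_le_sqrt (by linarith [hS0 N]))
          (Real.sqrt_nonneg _)
    _ = Real.sqrt δ * Real.sqrt N := mul_comm _ _

lemma s2_div_tendsto (S : ℕ → ℝ) (δ T : ℝ) (hS : Tendsto S atTop (𝓝 T))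
    (hS0 : ∀ N, 0 ≤ S N) (hSδ : ∀ N, S N ≤ δ) :
    Tendsto (fun N : ℕ => ((⌊Real.sqrt (N * (δ - S N))⌋₊ : ℕ) : ℝ) ^ 2 / N)
      atTop (𝓝 (δ - T)) := by
  set s : ℕ → ℕ := fun N => ⌊Real.sqrt (N * (δ - S N))⌋₊ with hs
  have hδ0 : 0 ≤ δ := le_trans (hS0 0) (hSδ 0)
  have hsle : ∀ N, ((s N : ℕ) : ℝ) ≤ Real.sqrt δ * Real.sqrt N := s_le_sqrt S δ hS0 hSδ
  have h2s1 : Tendsto (fun N : ℕ => (2 * (s N : ℝ) + 1) / N) atTop (𝓝 0) := by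
    apply DenseAux.small_div _ (2 * Real.sqrt δ + 1)
    filter_upwards [eventually_ge_atTop 1] with N hN1
    have hN1' : (1:ℝ) ≤ N := by exact_mod_cast hN1
    have hq2 : (1:ℝ) ≤ Real.sqrt N := one_le_sqrt' hN1'
    have hq4 : (1:ℝ) ≤ Real.sqrt (Real.sqrt N) := one_le_sqrt' hq2
    have hs' := hsle N
    have hδ' : (0:ℝ) ≤ Real.sqrt δ := Real.sqrt_nonneg _
    constructor
    · positivity
    · nlinarith [Real.sqrt_nonneg (N:ℝ)]
  have hlow : Tendsto (fun N : ℕ => (δ - S N) - (2 * (s N : ℝ) + 1) / N) atTop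
      (𝓝 (δ - T)) := by
    simpa using (tendsto_const_nhds.sub hS).sub h2s1
  have hup : Tendsto (fun N : ℕ => δ - S N) atTop (𝓝 (δ - T)) :=
    tendsto_const_nhds.sub hS
  refine tendsto_of_tendsto_of_tendsto_of_le_of_le' hlow hup ?_ ?_
  · filter_upwards [eventually_ge_atTop 1] with N hN1
    have hNpos : (0:ℝ) < N := by exact_mod_cast hN1
    have h0 : (0:ℝ) ≤ (N : ℝ) * (δ - S N) :=
      mul_nonneg (Nat.cast_nonneg _) (by linarith [hS0 N, hSδ N])
    have hkey : (N : ℝ) * (δ - S N) < ((s N : ℝ) + 1) ^ 2 := by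
      have h1 : Real.sqrt ((N : ℝ) * (δ - S N)) < (s N : ℝ) + 1 := Nat.lt_floor_add_one _
      have h2 := Real.sq_sqrt h0
      nlinarith [Real.sqrt_nonneg ((N : ℝ) * (δ - S N))]
    have heq : (δ - S N) - (2 * (s N : ℝ) + 1) / N
        = ((δ - S N) * N - (2 * (s N : ℝ) + 1)) / N := by
      field_simp
    rw [heq]
    gcongr
    nlinarith
  · filter_upwards [eventually_ge_atTop 1] with N hN1
    have hNpos : (0:ℝ) < N := by exact_mod_cast hN1
    have h0 : (0:ℝ) ≤ (N : ℝ) * (δ - S N) :=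
      mul_nonneg (Nat.cast_nonneg _) (by linarith [hS0 N, hSδ N])
    have h1 : ((s N : ℕ) : ℝ) ≤ Real.sqrt ((N : ℝ) * (δ - S N)) :=
      Nat.floor_le (Real.sqrt_nonneg _)
    have h2 := Real.sq_sqrt h0
    rw [div_le_iff₀ hNpos]
    nlinarith [Real.sqrt_nonneg ((N : ℝ) * (δ - S N)), (Nat.cast_nonneg (s N) : (0:ℝ) ≤ (s N : ℝ))]

lemma sum_floor_div_tendsto (NNf mf : ℕ → ℕ)
    (hNN : Tendsto (fun N => (NNf N : ℝ) / N) atTop (𝓝 1))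
    (hm : Tendsto mf atTop atTop)
    (hmdiv : Tendsto (fun N => (mf N : ℝ) / N) atTop (𝓝 0))
    (a b : ℕ → ℝ) (ha : ∀ k, 0 ≤ a k) (hb : ∀ k, 0 ≤ b k)
    (hsum : Summable fun k => a k + b k) :
    Tendsto (fun N => ((∑ k ∈ Finset.range (mf N),
        (⌊(NNf N : ℝ) * a k⌋₊ + ⌊(NNf N : ℝ) * b k⌋₊) : ℕ) : ℝ) / N)
      atTop (𝓝 (∑' k, (a k + b k))) := by
  have hS : Tendsto (fun N => ∑ k ∈ Finset.range (mf N), (a k + b k)) atTop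
      (𝓝 (∑' k, (a k + b k))) := hsum.hasSum.tendsto_sum_nat.comp hm
  have hup : Tendsto (fun N => (NNf N : ℝ) / N * (∑ k ∈ Finset.range (mf N), (a k + b k)))
      atTop (𝓝 (∑' k, (a k + b k))) := by
    simpa using hNN.mul hS
  have hlow : Tendsto (fun N => (NNf N : ℝ) / N * (∑ k ∈ Finset.range (mf N), (a k + b k))
      - 2 * ((mf N : ℝ) / N)) atTop (𝓝 (∑' k, (a k + b k))) := by
    simpa using hup.sub (hmdiv.const_mul 2)
  refine tendsto_of_tendsto_of_tendsto_of_le_of_le' hlow hup ?_ ?_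
  · filter_upwards [eventually_ge_atTop 1] with N hN1
    have hNpos : (0:ℝ) < N := by exact_mod_cast hN1
    have hterm : ∀ k ∈ Finset.range (mf N),
        (NNf N : ℝ) * (a k + b k) - 2
          ≤ ((⌊(NNf N : ℝ) * a k⌋₊ : ℝ) + (⌊(NNf N : ℝ) * b k⌋₊ : ℝ)) := by
      intro k _
      have h1 : (NNf N : ℝ) * a k < (⌊(NNf N : ℝ) * a k⌋₊ : ℝ) + 1 := Nat.lt_floor_add_one _
      have h2 : (NNf N : ℝ) * b k < (⌊(NNf N : ℝ) * b k⌋₊ : ℝ) + 1 := Nat.lt_floor_add_one _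
      nlinarith
    have hsum1 : (NNf N : ℝ) * (∑ k ∈ Finset.range (mf N), (a k + b k)) - 2 * (mf N : ℝ)
        ≤ ((∑ k ∈ Finset.range (mf N),
          (⌊(NNf N : ℝ) * a k⌋₊ + ⌊(NNf N : ℝ) * b k⌋₊) : ℕ) : ℝ) := by
      push_cast
      rw [Finset.mul_sum]
      calc ∑ k ∈ Finset.range (mf N), ((NNf N : ℝ) * (a k + b k)) - 2 * (mf N : ℝ)
          = ∑ k ∈ Finset.range (mf N), ((NNf N : ℝ) * (a k + b k) - 2) := by
            rw [Finset.sum_sub_distrib, Finset.sum_const, Finset.card_range]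
            push_cast
            ring
        _ ≤ _ := Finset.sum_le_sum hterm
    have heq : (NNf N : ℝ) / N * (∑ k ∈ Finset.range (mf N), (a k + b k)) - 2 * ((mf N : ℝ) / N)
        = ((NNf N : ℝ) * (∑ k ∈ Finset.range (mf N), (a k + b k)) - 2 * (mf N : ℝ)) / N := by
      ring
    rw [heq]
    gcongr
  · filter_upwards [eventually_ge_atTop 1] with N hN1
    have hNpos : (0:ℝ) < N := by exact_mod_cast hN1
    have hsum1 : ((∑ k ∈ Finset.range (mf N),
        (⌊(NNf N : ℝ) * a k⌋₊ + ⌊(NNf N : ℝ) * b k⌋₊) : ℕ) : ℝ)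
        ≤ (NNf N : ℝ) * (∑ k ∈ Finset.range (mf N), (a k + b k)) := by
      push_cast
      rw [Finset.mul_sum]
      refine Finset.sum_le_sum fun k _ => ?_
      have h1 : (⌊(NNf N : ℝ) * a k⌋₊ : ℝ) ≤ (NNf N : ℝ) * a k :=
        Nat.floor_le (mul_nonneg (Nat.cast_nonneg _) (ha k))
      have h2 : (⌊(NNf N : ℝ) * b k⌋₊ : ℝ) ≤ (NNf N : ℝ) * b k :=
        Nat.floor_le (mul_nonneg (Nat.cast_nonneg _) (hb k))
      nlinarith
    have heq : (NNf N : ℝ) / N * (∑ k ∈ Finset.range (mf N), (a k + b k))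
        = ((NNf N : ℝ) * (∑ k ∈ Finset.range (mf N), (a k + b k))) / N := by
      ring
    rw [heq]
    gcongr


end Analysis



end DenseAux

open DenseAux

set_option maxHeartbeats 2000000 in
/-- Every point `ω ∈ Ω` is the coordinatewise limit of a sequence `ι_N(λ^{(N)})` with
`λ^{(N)} ∈ SGN(N)`: every coordinate of `α⁺, β⁺, α⁻, β⁻` converges, and the coordinates
`δ± = |λ^{(N)±}|/N` converge to `δ±(ω)`.  In other words, `⋃_N ι_N(SGN(N))` is dense
in `Ω` in the product topology. -/
theorem iota_images_dense_in_Omega (ω : OmegaPoint) (hω : InOmega ω) :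
    ∃ l : (N : ℕ) → Signature N,
      (∀ k, Tendsto (fun N => alphaCoord N (sigPosDiagram (l N)) k) atTop (𝓝 (ω.alphaP k))) ∧
      (∀ k, Tendsto (fun N => betaCoord N (sigPosDiagram (l N)) k) atTop (𝓝 (ω.betaP k))) ∧
      (∀ k, Tendsto (fun N => alphaCoord N (sigNegDiagram (l N)) k) atTop (𝓝 (ω.alphaM k))) ∧
      (∀ k, Tendsto (fun N => betaCoord N (sigNegDiagram (l N)) k) atTop (𝓝 (ω.betaM k))) ∧
      Tendsto (fun N => ((sigPosDiagram (l N)).card : ℝ) / N) atTop (𝓝 ω.deltaP) ∧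
      Tendsto (fun N => ((sigNegDiagram (l N)).card : ℝ) / N) atTop (𝓝 ω.deltaM) := by
  obtain ⟨hαP, hαP0, hβP, hβP0, hαM, hαM0, hβM, hβM0, hδP0, hδM0, hβ1, hsmP, hleP, hsmM,
    hleM⟩ := hω
  have hmt : Tendsto mfun atTop atTop := tendsto_mfun
  have hSPt : Tendsto (SP ω) atTop (𝓝 (∑' k, (ω.alphaP k + ω.betaP k))) :=
    hsmP.hasSum.tendsto_sum_nat.comp hmt
  have hSMt : Tendsto (SM ω) atTop (𝓝 (∑' k, (ω.alphaM k + ω.betaM k))) :=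
    hsmM.hasSum.tendsto_sum_nat.comp hmt
  have hSP0 : ∀ N, 0 ≤ SP ω N := fun N =>
    Finset.sum_nonneg fun k _ => add_nonneg (hαP0 k) (hβP0 k)
  have hSM0 : ∀ N, 0 ≤ SM ω N := fun N =>
    Finset.sum_nonneg fun k _ => add_nonneg (hαM0 k) (hβM0 k)
  have hSPδ : ∀ N, SP ω N ≤ ω.deltaP := fun N =>
    le_trans (Summable.sum_le_tsum _ (fun k _ => add_nonneg (hαP0 k) (hβP0 k)) hsmP) hleP
  have hSMδ : ∀ N, SM ω N ≤ ω.deltaM := fun N =>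
    le_trans (Summable.sum_le_tsum _ (fun k _ => add_nonneg (hαM0 k) (hβM0 k)) hsmM) hleM
  have hsPle : ∀ N, (sP ω N : ℝ) ≤ Real.sqrt ω.deltaP * Real.sqrt N := fun N =>
    s_le_sqrt (SP ω) ω.deltaP hSP0 hSPδ N
  have hsMle : ∀ N, (sM ω N : ℝ) ≤ Real.sqrt ω.deltaM * Real.sqrt N := fun N =>
    s_le_sqrt (SM ω) ω.deltaM hSM0 hSMδ N
  have hccdiv : Tendsto (fun N => (cc ω N : ℝ) / N) atTop (𝓝 0) := by
    apply DenseAux.small_div _ (4 + Real.sqrt ω.deltaP + Real.sqrt ω.deltaM)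
    filter_upwards [eventually_ge_atTop 1] with N hN1
    have hN1' : (1:ℝ) ≤ N := by exact_mod_cast hN1
    have hq2 : (1:ℝ) ≤ Real.sqrt N := one_le_sqrt' hN1'
    have hq4 : (1:ℝ) ≤ Real.sqrt (Real.sqrt N) := one_le_sqrt' hq2
    have hm := mfun_le N
    have hsp := hsPle N
    have hsm := hsMle N
    refine ⟨by positivity, ?_⟩
    have hcceq : (cc ω N : ℝ) = 2 * (mfun N : ℝ) + (sP ω N : ℝ) + (sM ω N : ℝ) + 2 := by
      rw [cc]; push_cast; ring
    rw [hcceq]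
    nlinarith [Real.sqrt_nonneg ω.deltaP, Real.sqrt_nonneg ω.deltaM,
      Real.sqrt_nonneg (N:ℝ), Real.sqrt_nonneg (Real.sqrt (N:ℝ))]
  have hccN : ∀ᶠ N in atTop, cc ω N ≤ N := by
    have h1 : ∀ᶠ N in atTop, (cc ω N : ℝ) / N < 1 := hccdiv.eventually_lt_const one_pos
    filter_upwards [h1, eventually_ge_atTop 1] with N h hN1
    have hNpos : (0:ℝ) < N := by exact_mod_cast hN1
    have h2 : (cc ω N : ℝ) < N := (div_lt_one hNpos).mp h
    exact_mod_cast h2.le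
  have hNNdiv : Tendsto (fun N => (NN ω N : ℝ) / N) atTop (𝓝 1) := by
    have heq : ∀ᶠ N in atTop, 1 - (cc ω N : ℝ) / N = (NN ω N : ℝ) / N := by
      filter_upwards [hccN, eventually_ge_atTop 1] with N hc hN1
      have hNpos : (0:ℝ) < N := by exact_mod_cast hN1
      rw [NN, Nat.cast_sub hc]
      field_simp
    exact Tendsto.congr' heq (by simpa using tendsto_const_nhds.sub hccdiv)
  have hgood : ∀ᶠ N in atTop, RP ω N + RM ω N ≤ N := by
    filter_upwards [hccN] with N hc
    have hb1 : (BP ω N 0 : ℝ) ≤ (NN ω N : ℝ) * ω.betaP 0 :=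
      Nat.floor_le (mul_nonneg (Nat.cast_nonneg _) (hβP0 0))
    have hb2 : (BM ω N 0 : ℝ) ≤ (NN ω N : ℝ) * ω.betaM 0 :=
      Nat.floor_le (mul_nonneg (Nat.cast_nonneg _) (hβM0 0))
    have hsum0 : (BP ω N 0 : ℝ) + (BM ω N 0 : ℝ) ≤ (NN ω N : ℝ) := by
      nlinarith [(Nat.cast_nonneg (NN ω N) : (0:ℝ) ≤ (NN ω N : ℝ))]
    have hBPBM : BP ω N 0 + BM ω N 0 ≤ NN ω N := by exact_mod_cast hsum0
    simp only [RP, RM, NN, cc] at hBPBM hc ⊢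
    omega
  have hAPt : ∀ k, Tendsto (fun N => (AP ω N k : ℝ) / N) atTop (𝓝 (ω.alphaP k)) :=
    fun k => floor_div_tendsto (NN ω) hNNdiv _ (hαP0 k)
  have hBPt : ∀ k, Tendsto (fun N => (BP ω N k : ℝ) / N) atTop (𝓝 (ω.betaP k)) :=
    fun k => floor_div_tendsto (NN ω) hNNdiv _ (hβP0 k)
  have hAMt : ∀ k, Tendsto (fun N => (AM ω N k : ℝ) / N) atTop (𝓝 (ω.alphaM k)) :=
    fun k => floor_div_tendsto (NN ω) hNNdiv _ (hαM0 k)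
  have hBMt : ∀ k, Tendsto (fun N => (BM ω N k : ℝ) / N) atTop (𝓝 (ω.betaM k)) :=
    fun k => floor_div_tendsto (NN ω) hNNdiv _ (hβM0 k)
  have hmdiv : Tendsto (fun N => (mfun N : ℝ) / N) atTop (𝓝 0) := by
    apply DenseAux.small_div _ 1
    filter_upwards [eventually_ge_atTop 1] with N hN1
    have hN1' : (1:ℝ) ≤ N := by exact_mod_cast hN1
    have hq2 : (1:ℝ) ≤ Real.sqrt N := one_le_sqrt' hN1'
    have hq4 : (1:ℝ) ≤ Real.sqrt (Real.sqrt N) := one_le_sqrt' hq2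
    have hm := mfun_le N
    refine ⟨by positivity, ?_⟩
    nlinarith [Real.sqrt_nonneg (Real.sqrt (N:ℝ))]
  have hms1P : Tendsto (fun N => ((mfun N + sP ω N + 1 : ℕ) : ℝ) / N) atTop (𝓝 0) := by
    apply DenseAux.small_div _ (2 + Real.sqrt ω.deltaP)
    filter_upwards [eventually_ge_atTop 1] with N hN1
    have hN1' : (1:ℝ) ≤ N := by exact_mod_cast hN1
    have hq2 : (1:ℝ) ≤ Real.sqrt N := one_le_sqrt' hN1'
    have hq4 : (1:ℝ) ≤ Real.sqrt (Real.sqrt N) := one_le_sqrt' hq2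
    have hm := mfun_le N
    have hsp := hsPle N
    refine ⟨by positivity, ?_⟩
    push_cast
    nlinarith [Real.sqrt_nonneg ω.deltaP, Real.sqrt_nonneg (N:ℝ),
      Real.sqrt_nonneg (Real.sqrt (N:ℝ))]
  have hms1M : Tendsto (fun N => ((mfun N + sM ω N + 1 : ℕ) : ℝ) / N) atTop (𝓝 0) := by
    apply DenseAux.small_div _ (2 + Real.sqrt ω.deltaM)
    filter_upwards [eventually_ge_atTop 1] with N hN1
    have hN1' : (1:ℝ) ≤ N := by exact_mod_cast hN1
    have hq2 : (1:ℝ) ≤ Real.sqrt N := one_le_sqrt' hN1'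
    have hq4 : (1:ℝ) ≤ Real.sqrt (Real.sqrt N) := one_le_sqrt' hq2
    have hm := mfun_le N
    have hsm := hsMle N
    refine ⟨by positivity, ?_⟩
    push_cast
    nlinarith [Real.sqrt_nonneg ω.deltaM, Real.sqrt_nonneg (N:ℝ),
      Real.sqrt_nonneg (Real.sqrt (N:ℝ))]
  have hquadP : Tendsto
      (fun N => ((mfun N * mfun N + 2 * mfun N * sP ω N + 2 * mfun N : ℕ) : ℝ) / N)
      atTop (𝓝 0) := by
    apply DenseAux.small_div _ (3 + 2 * Real.sqrt ω.deltaP)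
    filter_upwards [eventually_ge_atTop 1] with N hN1
    have hN1' : (1:ℝ) ≤ N := by exact_mod_cast hN1
    have hq2 : (1:ℝ) ≤ Real.sqrt N := one_le_sqrt' hN1'
    have hq4 : (1:ℝ) ≤ Real.sqrt (Real.sqrt N) := one_le_sqrt' hq2
    have hm := mfun_le N
    have hsp := hsPle N
    have hm2 : (mfun N : ℝ) * (mfun N : ℝ) ≤ Real.sqrt N := by
      have h := Real.mul_self_sqrt (Real.sqrt_nonneg (N:ℝ))
      nlinarith [(Nat.cast_nonneg (mfun N) : (0:ℝ) ≤ (mfun N : ℝ))]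
    refine ⟨by positivity, ?_⟩
    push_cast
    nlinarith [Real.sqrt_nonneg ω.deltaP, Real.sqrt_nonneg (N:ℝ),
      Real.sqrt_nonneg (Real.sqrt (N:ℝ)), (Nat.cast_nonneg (mfun N) : (0:ℝ) ≤ (mfun N : ℝ)),
      (Nat.cast_nonneg (sP ω N) : (0:ℝ) ≤ (sP ω N : ℝ))]
  have hquadM : Tendsto
      (fun N => ((mfun N * mfun N + 2 * mfun N * sM ω N + 2 * mfun N : ℕ) : ℝ) / N)
      atTop (𝓝 0) := by
    apply DenseAux.small_div _ (3 + 2 * Real.sqrt ω.deltaM)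
    filter_upwards [eventually_ge_atTop 1] with N hN1
    have hN1' : (1:ℝ) ≤ N := by exact_mod_cast hN1
    have hq2 : (1:ℝ) ≤ Real.sqrt N := one_le_sqrt' hN1'
    have hq4 : (1:ℝ) ≤ Real.sqrt (Real.sqrt N) := one_le_sqrt' hq2
    have hm := mfun_le N
    have hsm := hsMle N
    have hm2 : (mfun N : ℝ) * (mfun N : ℝ) ≤ Real.sqrt N := by
      have h := Real.mul_self_sqrt (Real.sqrt_nonneg (N:ℝ))
      nlinarith [(Nat.cast_nonneg (mfun N) : (0:ℝ) ≤ (mfun N : ℝ))]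
    refine ⟨by positivity, ?_⟩
    push_cast
    nlinarith [Real.sqrt_nonneg ω.deltaM, Real.sqrt_nonneg (N:ℝ),
      Real.sqrt_nonneg (Real.sqrt (N:ℝ)), (Nat.cast_nonneg (mfun N) : (0:ℝ) ≤ (mfun N : ℝ)),
      (Nat.cast_nonneg (sM ω N) : (0:ℝ) ≤ (sM ω N : ℝ))]
  have hsumPt : Tendsto
      (fun N => ((∑ k ∈ Finset.range (mfun N), (AP ω N k + BP ω N k) : ℕ) : ℝ) / N)
      atTop (𝓝 (∑' k, (ω.alphaP k + ω.betaP k))) :=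
    sum_floor_div_tendsto (NN ω) mfun hNNdiv hmt hmdiv _ _ hαP0 hβP0 hsmP
  have hsumMt : Tendsto
      (fun N => ((∑ k ∈ Finset.range (mfun N), (AM ω N k + BM ω N k) : ℕ) : ℝ) / N)
      atTop (𝓝 (∑' k, (ω.alphaM k + ω.betaM k))) :=
    sum_floor_div_tendsto (NN ω) mfun hNNdiv hmt hmdiv _ _ hαM0 hβM0 hsmM
  have hs2Pt : Tendsto (fun N => ((sP ω N : ℕ) : ℝ) ^ 2 / N) atTop
      (𝓝 (ω.deltaP - ∑' k, (ω.alphaP k + ω.betaP k))) :=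
    s2_div_tendsto (SP ω) ω.deltaP _ hSPt hSP0 hSPδ
  have hs2Mt : Tendsto (fun N => ((sM ω N : ℕ) : ℝ) ^ 2 / N) atTop
      (𝓝 (ω.deltaM - ∑' k, (ω.alphaM k + ω.betaM k))) :=
    s2_div_tendsto (SM ω) ω.deltaM _ hSMt hSM0 hSMδ
  refine ⟨fun N => sig hαP hβP hαM hβM N, ?_, ?_, ?_, ?_, ?_, ?_⟩
  · -- α⁺ coordinates
    intro k
    have hup0 : Tendsto
        (fun N => (AP ω N k : ℝ) / N + ((mfun N + sP ω N + 1 : ℕ) : ℝ) / N) atTop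
        (𝓝 (ω.alphaP k)) := by
      simpa using (hAPt k).add hms1P
    refine tendsto_of_tendsto_of_tendsto_of_le_of_le' (hAPt k) hup0 ?_ ?_ <;>
    · filter_upwards [hgood, hmt.eventually_gt_atTop k, eventually_ge_atTop 1]
        with N hg hk hN1
      have hmem : ∀ i j : ℕ, (i, j) ∈ sigPosDiagram (sig hαP hβP hαM hβM N) ↔
          j < rfun (mfun N) (sP ω N) (AP ω N) (BP ω N) i :=
        fun i j => mem_sigPos hαP hβP hαM hβM hg i j
      have hd : diagLen (sigPosDiagram (sig hαP hβP hαM hβM N)) = mfun N + sP ω N :=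
        diagLen_rfun (BP_antitone hβP N) hmem
      have hr : (sigPosDiagram (sig hαP hβP hαM hβM N)).rowLen k = AP ω N k + mfun N + sP ω N + 1 :=
        rowLen_rfun hmem hk
      have hNpos : (0:ℝ) < N := by exact_mod_cast hN1
      have hk' : (k : ℝ) + 1 ≤ (mfun N : ℝ) := by exact_mod_cast hk
      rw [alphaCoord, if_pos (show k < diagLen _ by rw [hd]; omega), hr]
      push_cast
      first
      | · rw [div_le_div_iff₀ hNpos hNpos]
          nlinarith [(Nat.cast_nonneg (sP ω N) : (0:ℝ) ≤ (sP ω N : ℝ))]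
      | · rw [← add_div, div_le_div_iff₀ hNpos hNpos]
          nlinarith [(Nat.cast_nonneg k : (0:ℝ) ≤ (k : ℝ))]
  · -- β⁺ coordinates
    intro k
    have hup0 : Tendsto
        (fun N => (BP ω N k : ℝ) / N + ((mfun N + sP ω N + 1 : ℕ) : ℝ) / N) atTop
        (𝓝 (ω.betaP k)) := by
      simpa using (hBPt k).add hms1P
    refine tendsto_of_tendsto_of_tendsto_of_le_of_le' (hBPt k) hup0 ?_ ?_ <;>
    · filter_upwards [hgood, hmt.eventually_gt_atTop k, eventually_ge_atTop 1]
        with N hg hk hN1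
      have hmem : ∀ i j : ℕ, (i, j) ∈ sigPosDiagram (sig hαP hβP hαM hβM N) ↔
          j < rfun (mfun N) (sP ω N) (AP ω N) (BP ω N) i :=
        fun i j => mem_sigPos hαP hβP hαM hβM hg i j
      have hd : diagLen (sigPosDiagram (sig hαP hβP hαM hβM N)) = mfun N + sP ω N :=
        diagLen_rfun (BP_antitone hβP N) hmem
      have hr : (sigPosDiagram (sig hαP hβP hαM hβM N)).colLen k = mfun N + sP ω N + BP ω N k + 1 :=
        colLen_rfun (BP_antitone hβP N) hmem hk
      have hNpos : (0:ℝ) < N := by exact_mod_cast hN1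
      have hk' : (k : ℝ) + 1 ≤ (mfun N : ℝ) := by exact_mod_cast hk
      rw [betaCoord, if_pos (show k < diagLen _ by rw [hd]; omega), hr]
      push_cast
      first
      | · rw [div_le_div_iff₀ hNpos hNpos]
          nlinarith [(Nat.cast_nonneg (sP ω N) : (0:ℝ) ≤ (sP ω N : ℝ))]
      | · rw [← add_div, div_le_div_iff₀ hNpos hNpos]
          nlinarith [(Nat.cast_nonneg k : (0:ℝ) ≤ (k : ℝ))]
  · -- α⁻ coordinates
    intro k
    have hup0 : Tendsto
        (fun N => (AM ω N k : ℝ) / N + ((mfun N + sM ω N + 1 : ℕ) : ℝ) / N) atTop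
        (𝓝 (ω.alphaM k)) := by
      simpa using (hAMt k).add hms1M
    refine tendsto_of_tendsto_of_tendsto_of_le_of_le' (hAMt k) hup0 ?_ ?_ <;>
    · filter_upwards [hgood, hmt.eventually_gt_atTop k, eventually_ge_atTop 1]
        with N hg hk hN1
      have hmem : ∀ i j : ℕ, (i, j) ∈ sigNegDiagram (sig hαP hβP hαM hβM N) ↔
          j < rfun (mfun N) (sM ω N) (AM ω N) (BM ω N) i :=
        fun i j => mem_sigNeg hαP hβP hαM hβM hg i j
      have hd : diagLen (sigNegDiagram (sig hαP hβP hαM hβM N)) = mfun N + sM ω N :=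
        diagLen_rfun (BM_antitone hβM N) hmem
      have hr : (sigNegDiagram (sig hαP hβP hαM hβM N)).rowLen k = AM ω N k + mfun N + sM ω N + 1 :=
        rowLen_rfun hmem hk
      have hNpos : (0:ℝ) < N := by exact_mod_cast hN1
      have hk' : (k : ℝ) + 1 ≤ (mfun N : ℝ) := by exact_mod_cast hk
      rw [alphaCoord, if_pos (show k < diagLen _ by rw [hd]; omega), hr]
      push_cast
      first
      | · rw [div_le_div_iff₀ hNpos hNpos]
          nlinarith [(Nat.cast_nonneg (sM ω N) : (0:ℝ) ≤ (sM ω N : ℝ))]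
      | · rw [← add_div, div_le_div_iff₀ hNpos hNpos]
          nlinarith [(Nat.cast_nonneg k : (0:ℝ) ≤ (k : ℝ))]
  · -- β⁻ coordinates
    intro k
    have hup0 : Tendsto
        (fun N => (BM ω N k : ℝ) / N + ((mfun N + sM ω N + 1 : ℕ) : ℝ) / N) atTop
        (𝓝 (ω.betaM k)) := by
      simpa using (hBMt k).add hms1M
    refine tendsto_of_tendsto_of_tendsto_of_le_of_le' (hBMt k) hup0 ?_ ?_ <;>
    · filter_upwards [hgood, hmt.eventually_gt_atTop k, eventually_ge_atTop 1]
        with N hg hk hN1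
      have hmem : ∀ i j : ℕ, (i, j) ∈ sigNegDiagram (sig hαP hβP hαM hβM N) ↔
          j < rfun (mfun N) (sM ω N) (AM ω N) (BM ω N) i :=
        fun i j => mem_sigNeg hαP hβP hαM hβM hg i j
      have hd : diagLen (sigNegDiagram (sig hαP hβP hαM hβM N)) = mfun N + sM ω N :=
        diagLen_rfun (BM_antitone hβM N) hmem
      have hr : (sigNegDiagram (sig hαP hβP hαM hβM N)).colLen k = mfun N + sM ω N + BM ω N k + 1 :=
        colLen_rfun (BM_antitone hβM N) hmem hk
      have hNpos : (0:ℝ) < N := by exact_mod_cast hN1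
      have hk' : (k : ℝ) + 1 ≤ (mfun N : ℝ) := by exact_mod_cast hk
      rw [betaCoord, if_pos (show k < diagLen _ by rw [hd]; omega), hr]
      push_cast
      first
      | · rw [div_le_div_iff₀ hNpos hNpos]
          nlinarith [(Nat.cast_nonneg (sM ω N) : (0:ℝ) ≤ (sM ω N : ℝ))]
      | · rw [← add_div, div_le_div_iff₀ hNpos hNpos]
          nlinarith [(Nat.cast_nonneg k : (0:ℝ) ≤ (k : ℝ))]
  · -- δ⁺
    have hfin := (hsumPt.add hquadP).add hs2Pt
    rw [show (∑' k, (ω.alphaP k + ω.betaP k)) + 0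
        + (ω.deltaP - ∑' k, (ω.alphaP k + ω.betaP k)) = ω.deltaP by ring] at hfin
    refine Tendsto.congr' ?_ hfin
    filter_upwards [hgood] with N hg
    have hmem : ∀ i j : ℕ, (i, j) ∈ sigPosDiagram (sig hαP hβP hαM hβM N) ↔
        j < rfun (mfun N) (sP ω N) (AP ω N) (BP ω N) i :=
      fun i j => mem_sigPos hαP hβP hαM hβM hg i j
    have hc := card_rfun (AP_antitone hαP N) (BP_antitone hβP N) hmem
    rw [hc]
    push_cast
    ring
  · -- δ⁻
    have hfin := (hsumMt.add hquadM).add hs2Mt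
    rw [show (∑' k, (ω.alphaM k + ω.betaM k)) + 0
        + (ω.deltaM - ∑' k, (ω.alphaM k + ω.betaM k)) = ω.deltaM by ring] at hfin
    refine Tendsto.congr' ?_ hfin
    filter_upwards [hgood] with N hg
    have hmem : ∀ i j : ℕ, (i, j) ∈ sigNegDiagram (sig hαP hβP hαM hβM N) ↔
        j < rfun (mfun N) (sM ω N) (AM ω N) (BM ω N) i :=
      fun i j => mem_sigNeg hαP hβP hαM hβM hg i j
    have hc := card_rfun (AM_antitone hαM N) (BM_antitone hβM N) hmem
    rw [hc]
    push_cast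
    ring
end

section
/- Let z, w ∈ ℂ ∖ ℤ and N ≥ 1. Then the weight W_N has power-law decay of exponent 2 Re(z + w) + 2N at infinity: there exist constants C ≥ c > 0 and L ∈ ℕ such that for every l ∈ ℤ with |l| ≥ L one has c · |l|^{−2Re(z+w)−2N} ≤ W_N(l) ≤ C · |l|^{−2Re(z+w)−2N}. -/
open Filter Topology

/-- The weight `W_N(l) = |Γ(z - l)|^{-2} |Γ(w + N + 1 + l)|^{-2}` on `ℤ`. -/
noncomputable def W (z w : ℂ) (N : ℕ) (l : ℤ) : ℝ :=
  (‖Complex.Gamma (z - l)‖ ^ 2)⁻¹ *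
    (‖Complex.Gamma (w + N + 1 + l)‖ ^ 2)⁻¹

namespace WeightAux

lemma not_int_add_nat_ne_neg_nat {a : ℂ} (ha : ∀ n : ℤ, a ≠ (n : ℂ)) (n : ℕ) :
    ∀ m : ℕ, (n : ℂ) + a ≠ -(m : ℂ) := by
  intro m h
  apply ha (-(m : ℤ) - (n : ℤ))
  push_cast
  linear_combination h

lemma Gamma_nat_add_ne_zero {a : ℂ} (ha : ∀ n : ℤ, a ≠ (n : ℂ)) (n : ℕ) :
    Complex.Gamma ((n : ℂ) + a) ≠ 0 :=
  Complex.Gamma_ne_zero (not_int_add_nat_ne_neg_nat ha n)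

lemma Gamma_ne_zero_of_not_int {a : ℂ} (ha : ∀ n : ℤ, a ≠ (n : ℂ)) :
    Complex.Gamma a ≠ 0 := by
  have := Gamma_nat_add_ne_zero ha 0
  simpa using this

lemma add_nat_ne_zero {a : ℂ} (ha : ∀ n : ℤ, a ≠ (n : ℂ)) (n : ℕ) :
    a + (n : ℂ) ≠ 0 := by
  intro h
  apply ha (-(n : ℤ))
  push_cast
  linear_combination h

lemma prod_ne_zero {a : ℂ} (ha : ∀ n : ℤ, a ≠ (n : ℂ)) (n : ℕ) :
    ∏ j ∈ Finset.range n, (a + (j : ℂ)) ≠ 0 := by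
  rw [Finset.prod_ne_zero_iff]
  intro j _
  exact add_nat_ne_zero ha j

lemma Gamma_nat_add {a : ℂ} (ha : ∀ n : ℤ, a ≠ (n : ℂ)) (n : ℕ) :
    Complex.Gamma ((n : ℂ) + a) = Complex.Gamma a * ∏ j ∈ Finset.range n, (a + (j : ℂ)) := by
  induction n with
  | zero => simp
  | succ n ih =>
    have h0 : (n : ℂ) + a ≠ 0 := by
      intro h
      apply ha (-(n : ℤ))
      push_cast
      linear_combination h
    have harg : ((n + 1 : ℕ) : ℂ) + a = ((n : ℂ) + a) + 1 := by push_cast; ring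
    rw [harg, Complex.Gamma_add_one _ h0, ih, Finset.prod_range_succ]
    ring

lemma tendsto_frac (a b : ℂ) (ha : ∀ n : ℤ, a ≠ (n : ℂ)) :
    Tendsto (fun n : ℕ => (b + (n : ℂ)) / (a + (n : ℂ))) atTop (𝓝 1) := by
  have h0 : Tendsto (fun n : ℕ => ((n : ℂ))⁻¹) atTop (𝓝 0) :=
    tendsto_inv_atTop_nhds_zero_nat (𝕜 := ℂ)
  have h1 : Tendsto (fun n : ℕ => (b * ((n : ℂ))⁻¹ + 1) / (a * ((n : ℂ))⁻¹ + 1))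
      atTop (𝓝 1) := by
    have hnum : Tendsto (fun n : ℕ => b * ((n : ℂ))⁻¹ + 1) atTop (𝓝 1) := by
      simpa using (h0.const_mul b).add_const 1
    have hden : Tendsto (fun n : ℕ => a * ((n : ℂ))⁻¹ + 1) atTop (𝓝 1) := by
      simpa using (h0.const_mul a).add_const 1
    have := hnum.div hden one_ne_zero
    rw [div_one] at this
    exact this
  refine Tendsto.congr' ?_ h1
  filter_upwards [eventually_ge_atTop 1] with n hn
  have hn0 : (n : ℂ) ≠ 0 := Nat.cast_ne_zero.mpr (by omega)
  have hden : a + (n : ℂ) ≠ 0 := add_nat_ne_zero ha n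
  field_simp

lemma tendsto_ratio (a b : ℂ) (ha : ∀ n : ℤ, a ≠ (n : ℂ)) (hb : ∀ n : ℤ, b ≠ (n : ℂ)) :
    Tendsto (fun n : ℕ =>
        Complex.Gamma ((n : ℂ) + a) / Complex.Gamma ((n : ℂ) + b) * (n : ℂ) ^ (b - a))
      atTop (𝓝 1) := by
  have hΓa : Complex.Gamma a ≠ 0 := Gamma_ne_zero_of_not_int ha
  have hΓb : Complex.Gamma b ≠ 0 := Gamma_ne_zero_of_not_int hb
  have hlim : Tendsto (fun n : ℕ =>
      Complex.GammaSeq b n / Complex.GammaSeq a n * ((b + (n : ℂ)) / (a + (n : ℂ)))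
        * (Complex.Gamma a / Complex.Gamma b)) atTop
      (𝓝 (Complex.Gamma b / Complex.Gamma a * 1 * (Complex.Gamma a / Complex.Gamma b))) :=
    (((Complex.GammaSeq_tendsto_Gamma b).div (Complex.GammaSeq_tendsto_Gamma a) hΓa).mul
      (tendsto_frac a b ha)).mul_const _
  have hval : Complex.Gamma b / Complex.Gamma a * 1 * (Complex.Gamma a / Complex.Gamma b)
      = 1 := by field_simp
  rw [hval] at hlim
  refine Tendsto.congr' ?_ hlim
  filter_upwards [eventually_ge_atTop 1] with n hn
  have hn0 : (n : ℂ) ≠ 0 := Nat.cast_ne_zero.mpr (by omega)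
  have hpa : ∏ j ∈ Finset.range n, (a + (j : ℂ)) ≠ 0 := prod_ne_zero ha n
  have hpb : ∏ j ∈ Finset.range n, (b + (j : ℂ)) ≠ 0 := prod_ne_zero hb n
  have han : a + (n : ℂ) ≠ 0 := add_nat_ne_zero ha n
  have hbn : b + (n : ℂ) ≠ 0 := add_nat_ne_zero hb n
  have hfac : ((n.factorial : ℂ)) ≠ 0 := Nat.cast_ne_zero.mpr n.factorial_ne_zero
  have hca : (n : ℂ) ^ a ≠ 0 := by
    simp [Complex.cpow_eq_zero_iff, hn0]
  have hcb : (n : ℂ) ^ (b - a) ≠ 0 := by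
    simp [Complex.cpow_eq_zero_iff, hn0]
  have hpow : (n : ℂ) ^ b = (n : ℂ) ^ a * (n : ℂ) ^ (b - a) := by
    rw [← Complex.cpow_add _ _ hn0]
    congr 1
    ring
  rw [Complex.GammaSeq, Complex.GammaSeq, Finset.prod_range_succ, Finset.prod_range_succ,
    Gamma_nat_add ha, Gamma_nat_add hb, hpow]
  field_simp

lemma tendsto_sq (a b : ℂ) (ha : ∀ n : ℤ, a ≠ (n : ℂ)) (hb : ∀ n : ℤ, b ≠ (n : ℂ)) :
    Tendsto (fun n : ℕ =>
        (‖Complex.Gamma ((n : ℂ) + a)‖) ^ 2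
          / (‖Complex.Gamma ((n : ℂ) + b)‖) ^ 2
          * (n : ℝ) ^ (2 * (b - a).re)) atTop (𝓝 1) := by
  have h := tendsto_ratio a b ha hb
  have h1 : Tendsto (fun n : ℕ =>
      (‖Complex.Gamma ((n : ℂ) + a) / Complex.Gamma ((n : ℂ) + b)
        * (n : ℂ) ^ (b - a)‖) ^ 2) atTop (𝓝 1) := by
    have habs := (continuous_norm.tendsto 1).comp h
    simp only [Function.comp_def, norm_one] at habs
    simpa using habs.pow 2
  refine Tendsto.congr' ?_ h1
  filter_upwards [eventually_ge_atTop 1] with n hn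
  have hn0 : (0 : ℝ) < (n : ℝ) := by positivity
  have hcast : ((n : ℝ) : ℂ) = (n : ℂ) := by push_cast; rfl
  have habs_cpow : ‖(n : ℂ) ^ (b - a)‖ = (n : ℝ) ^ (b - a).re := by
    rw [← hcast, Complex.norm_cpow_eq_rpow_re_of_pos hn0]
  rw [norm_mul, norm_div, habs_cpow, mul_pow, div_pow,
    ← Real.rpow_natCast ((n : ℝ) ^ (b - a).re) 2, ← Real.rpow_mul hn0.le]
  norm_num [mul_comm]

lemma abs_refl {u : ℂ} (hu : ∀ k : ℤ, u ≠ (k : ℂ)) (n : ℤ) :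
    ((‖Complex.Gamma (u - (n : ℂ))‖) ^ 2)⁻¹ =
      (‖Complex.sin (↑Real.pi * u)‖) ^ 2 / Real.pi ^ 2
        * (‖Complex.Gamma (1 - u + (n : ℂ))‖) ^ 2 := by
  have hrefl := Complex.Gamma_mul_Gamma_one_sub (u - (n : ℂ))
  have h1 : (1 : ℂ) - (u - (n : ℂ)) = 1 - u + (n : ℂ) := by ring
  rw [h1] at hrefl
  set S : ℝ := ‖Complex.sin (↑Real.pi * u)‖ with hS_def
  have hsu : Complex.sin (↑Real.pi * u) ≠ 0 := by
    rw [Complex.sin_ne_zero_iff]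
    intro k h
    apply hu k
    have hpi : (Real.pi : ℂ) ≠ 0 := Complex.ofReal_ne_zero.mpr Real.pi_ne_zero
    exact mul_left_cancel₀ hpi (h.trans (mul_comm _ _))
  have hS : S ≠ 0 := fun h => hsu (by simpa [hS_def] using h)
  have habs : ‖Complex.sin (↑Real.pi * (u - (n : ℂ)))‖ = S := by
    have harg : (Real.pi : ℂ) * (u - (n : ℂ)) = ↑Real.pi * u - (n : ℂ) * ↑Real.pi := by ring
    rw [harg, Complex.sin_antiperiodic.sub_int_mul_eq n, norm_mul]
    have : ‖((n.negOnePow : ℤ) : ℂ)‖ = 1 := by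
      rcases Int.units_eq_one_or n.negOnePow with h | h <;> simp [h]
    rw [this, one_mul]
  set A : ℝ := ‖Complex.Gamma (u - (n : ℂ))‖ with hA_def
  set B : ℝ := ‖Complex.Gamma (1 - u + (n : ℂ))‖ with hB_def
  have hB : B ≠ 0 := by
    have : (1 : ℂ) - u + (n : ℂ) ≠ 0 := by
      intro h
      apply hu (1 + n)
      push_cast
      linear_combination -h
    intro h
    have hne : Complex.Gamma (1 - u + (n : ℂ)) ≠ 0 := by
      apply Complex.Gamma_ne_zero
      intro m hm
      apply hu (1 + n + m)
      push_cast
      linear_combination -hm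
    exact hne (norm_eq_zero.mp (by simpa [hB_def] using h))
  have hAB : A * B = Real.pi / S := by
    rw [hA_def, hB_def, ← norm_mul, hrefl, norm_div, habs, Complex.norm_real, Real.norm_eq_abs,
      abs_of_pos Real.pi_pos]
  have hA_eq : A = Real.pi / S / B := by
    rw [eq_div_iff hB]
    exact hAB
  rw [hA_eq]
  have hπ : (Real.pi : ℝ) ≠ 0 := Real.pi_ne_zero
  field_simp

lemma sandwich {s q x α : ℝ} (hs : 0 < s) (hx : 0 < x)
    (h1 : 1 / 2 ≤ q * x ^ α) (h2 : q * x ^ α ≤ 2) :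
    s / 2 * x ^ (-α) ≤ s * q ∧ s * q ≤ 2 * s * x ^ (-α) := by
  have hy : 0 < x ^ α := Real.rpow_pos_of_pos hx α
  have hneg : x ^ (-α) = (x ^ α)⁻¹ := Real.rpow_neg hx.le α
  rw [hneg]
  constructor
  · rw [← div_eq_mul_inv, div_le_iff₀ hy]
    nlinarith
  · rw [← div_eq_mul_inv, le_div_iff₀ hy]
    nlinarith

end WeightAux

/-- For `z, w ∈ ℂ ∖ ℤ` and `N ≥ 1`, the weight `W_N` has power-law decay of exponent
`2 Re(z+w) + 2N` at infinity: there are constants `C ≥ c > 0` and `L ∈ ℕ` such that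
`c · |l|^{-2Re(z+w)-2N} ≤ W_N(l) ≤ C · |l|^{-2Re(z+w)-2N}` whenever `|l| ≥ L`. -/
theorem weight_power_law_decay (z w : ℂ) (hz : ∀ n : ℤ, z ≠ (n : ℂ))
    (hw : ∀ n : ℤ, w ≠ (n : ℂ)) (N : ℕ) (hN : 1 ≤ N) :
    ∃ (c C : ℝ) (L : ℕ), 0 < c ∧ c ≤ C ∧
      ∀ l : ℤ, (L : ℤ) ≤ |l| →
        c * ((|l| : ℤ) : ℝ) ^ (-(2 * (z + w).re) - 2 * N) ≤ W z w N l ∧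
        W z w N l ≤ C * ((|l| : ℤ) : ℝ) ^ (-(2 * (z + w).re) - 2 * N) := by
  set α : ℝ := 2 * (z + w).re + 2 * (N : ℝ) with hα_def
  have hu2 : ∀ k : ℤ, w + (N : ℂ) + 1 ≠ (k : ℂ) := by
    intro k h
    apply hw (k - N - 1)
    push_cast
    linear_combination h
  have ha₁ : ∀ n : ℤ, (1 : ℂ) - z ≠ (n : ℂ) := by
    intro n h
    apply hz (1 - n)
    push_cast
    linear_combination -h
  have ha₂ : ∀ n : ℤ, -w - (N : ℂ) ≠ (n : ℂ) := by
    intro n h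
    apply hw (-n - N)
    push_cast
    linear_combination -h
  set sz : ℝ := (‖Complex.sin (↑Real.pi * z)‖) ^ 2 / Real.pi ^ 2 with hsz_def
  set sw : ℝ := (‖Complex.sin (↑Real.pi * (w + (N : ℂ) + 1))‖) ^ 2 / Real.pi ^ 2
    with hsw_def
  have hpine : (Real.pi : ℂ) ≠ 0 := Complex.ofReal_ne_zero.mpr Real.pi_ne_zero
  have hsinz : Complex.sin (↑Real.pi * z) ≠ 0 := by
    rw [Complex.sin_ne_zero_iff]
    intro k h
    exact hz k (mul_left_cancel₀ hpine (h.trans (mul_comm _ _)))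
  have hsinw : Complex.sin (↑Real.pi * (w + (N : ℂ) + 1)) ≠ 0 := by
    rw [Complex.sin_ne_zero_iff]
    intro k h
    exact hu2 k (mul_left_cancel₀ hpine (h.trans (mul_comm _ _)))
  have hsz : 0 < sz := by
    have h1 := norm_pos_iff.mpr hsinz
    rw [hsz_def]
    positivity
  have hsw : 0 < sw := by
    have h1 := norm_pos_iff.mpr hsinw
    rw [hsw_def]
    positivity
  -- the two tendsto facts
  have ht1 := WeightAux.tendsto_sq (1 - z) (w + (N : ℂ) + 1) ha₁ hu2
  have he1 : 2 * ((w + (N : ℂ) + 1 - (1 - z)).re) = α := by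
    simp only [Complex.sub_re, Complex.add_re, Complex.one_re, Complex.natCast_re, hα_def]
    ring
  rw [he1] at ht1
  have ht2 := WeightAux.tendsto_sq (-w - (N : ℂ)) z ha₂ hz
  have he2 : 2 * ((z - (-w - (N : ℂ))).re) = α := by
    simp only [Complex.sub_re, Complex.add_re, Complex.neg_re, Complex.natCast_re, hα_def]
    ring
  rw [he2] at ht2
  have hmem : Set.Ioo (1 / 2 : ℝ) 2 ∈ 𝓝 (1 : ℝ) := Ioo_mem_nhds (by norm_num) (by norm_num)
  obtain ⟨L₁, hL₁⟩ := eventually_atTop.mp (ht1.eventually hmem)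
  obtain ⟨L₂, hL₂⟩ := eventually_atTop.mp (ht2.eventually hmem)
  -- representation of W on the positive side
  have hWpos : ∀ n : ℕ, W z w N (n : ℤ) =
      sz * ((‖Complex.Gamma ((n : ℂ) + (1 - z))‖) ^ 2
        / (‖Complex.Gamma ((n : ℂ) + (w + (N : ℂ) + 1))‖) ^ 2) := by
    intro n
    unfold W
    rw [WeightAux.abs_refl hz (n : ℤ)]
    have e1 : (1 : ℂ) - z + (((n : ℤ) : ℤ) : ℂ) = (n : ℂ) + (1 - z) := by push_cast; ring
    have e2 : w + (N : ℂ) + 1 + (((n : ℤ) : ℤ) : ℂ) = (n : ℂ) + (w + (N : ℂ) + 1) := by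
      push_cast; ring
    rw [e1, e2, div_eq_mul_inv, hsz_def]
    ring
  -- representation of W on the negative side
  have hWneg : ∀ m : ℕ, W z w N (-(m : ℤ)) =
      sw * ((‖Complex.Gamma ((m : ℂ) + (-w - (N : ℂ)))‖) ^ 2
        / (‖Complex.Gamma ((m : ℂ) + z)‖) ^ 2) := by
    intro m
    unfold W
    have e0 : w + (N : ℂ) + 1 + ((-(m : ℤ) : ℤ) : ℂ) = (w + (N : ℂ) + 1) - ((m : ℤ) : ℂ) := by
      push_cast; ring
    rw [e0, WeightAux.abs_refl hu2 (m : ℤ)]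
    have e1 : (1 : ℂ) - (w + (N : ℂ) + 1) + (((m : ℤ) : ℤ) : ℂ) = (m : ℂ) + (-w - (N : ℂ)) := by
      push_cast; ring
    have e2 : z - ((-(m : ℤ) : ℤ) : ℂ) = (m : ℂ) + z := by push_cast; ring
    rw [e1, e2, div_eq_mul_inv, hsw_def]
    ring
  have hminmax : min sz sw ≤ max sz sw :=
    le_trans (min_le_left _ _) (le_max_left _ _)
  have hmaxpos : 0 < max sz sw := lt_of_lt_of_le hsz (le_max_left _ _)
  refine ⟨min sz sw / 2, 2 * max sz sw, max (max L₁ L₂) 1, by positivity, by linarith, ?_⟩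
  intro l hl
  have hexp : -(2 * (z + w).re) - 2 * (N : ℝ) = -α := by rw [hα_def]; ring
  rcases le_or_gt 0 l with hl0 | hl0
  · -- positive side
    set n := l.toNat with hn_def
    have hln : l = (n : ℤ) := (Int.toNat_of_nonneg hl0).symm
    have habs_l : |l| = (n : ℤ) := by rw [abs_of_nonneg hl0, hln]
    have hn' : max (max L₁ L₂) 1 ≤ n := by
      have : ((max (max L₁ L₂) 1 : ℕ) : ℤ) ≤ (n : ℤ) := habs_l ▸ hl
      exact_mod_cast this
    have hL1n : L₁ ≤ n := le_trans (le_trans (le_max_left _ _) (le_max_left _ _)) hn'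
    have h1n : 1 ≤ n := le_trans (le_max_right _ _) hn'
    have hx : (0 : ℝ) < (n : ℝ) := by exact_mod_cast Nat.lt_of_lt_of_le Nat.zero_lt_one h1n
    have hg := hL₁ n hL1n
    have hsand := WeightAux.sandwich hsz hx hg.1.le hg.2.le
    rw [habs_l, hln, hexp, hWpos n]
    have hcast : (((n : ℤ) : ℤ) : ℝ) = (n : ℝ) := by push_cast; ring
    rw [hcast]
    have hrp : (0 : ℝ) < (n : ℝ) ^ (-α) := Real.rpow_pos_of_pos hx _
    constructor
    · calc min sz sw / 2 * (n : ℝ) ^ (-α) ≤ sz / 2 * (n : ℝ) ^ (-α) := by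
            apply mul_le_mul_of_nonneg_right _ hrp.le
            linarith [min_le_left sz sw]
        _ ≤ _ := hsand.1
    · calc sz * _ ≤ 2 * sz * (n : ℝ) ^ (-α) := hsand.2
        _ ≤ 2 * max sz sw * (n : ℝ) ^ (-α) := by
            apply mul_le_mul_of_nonneg_right _ hrp.le
            linarith [le_max_left sz sw]
  · -- negative side
    set m := (-l).toNat with hm_def
    have hlm : l = -(m : ℤ) := by
      have := Int.toNat_of_nonneg (neg_nonneg.mpr hl0.le)
      omega
    have habs_l : |l| = (m : ℤ) := by rw [abs_of_neg hl0]; omega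
    have hm' : max (max L₁ L₂) 1 ≤ m := by
      have : ((max (max L₁ L₂) 1 : ℕ) : ℤ) ≤ (m : ℤ) := habs_l ▸ hl
      exact_mod_cast this
    have hL2m : L₂ ≤ m := le_trans (le_trans (le_max_right _ _) (le_max_left _ _)) hm'
    have h1m : 1 ≤ m := le_trans (le_max_right _ _) hm'
    have hx : (0 : ℝ) < (m : ℝ) := by exact_mod_cast Nat.lt_of_lt_of_le Nat.zero_lt_one h1m
    have hg := hL₂ m hL2m
    have hsand := WeightAux.sandwich hsw hx hg.1.le hg.2.le
    rw [habs_l, hlm, hexp, hWneg m]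
    have hcast : (((m : ℤ) : ℤ) : ℝ) = (m : ℝ) := by push_cast; ring
    rw [hcast]
    have hrp : (0 : ℝ) < (m : ℝ) ^ (-α) := Real.rpow_pos_of_pos hx _
    constructor
    · calc min sz sw / 2 * (m : ℝ) ^ (-α) ≤ sw / 2 * (m : ℝ) ^ (-α) := by
            apply mul_le_mul_of_nonneg_right _ hrp.le
            linarith [min_le_right sz sw]
        _ ≤ _ := hsand.1
    · calc sw * _ ≤ 2 * sw * (m : ℝ) ^ (-α) := hsand.2
        _ ≤ 2 * max sz sw * (m : ℝ) ^ (-α) := by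
            apply mul_le_mul_of_nonneg_right _ hrp.le
            linarith [le_max_right sz sw]
end
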